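/- arXiv:1410.4406 — 2 statements merged into one kernel-verified Lean document; each statement's English description precedes it below -/
import Mathlib

section
/- Let a be a real number and let 0 ≤ R ≤ 1. The generalized harmonic Koebe function K_{a,R} is univalent (injective) on 𝔻 if and only if −2 ≤ a ≤ 2. -/
open Complex Set

noncomputable section

/-- The open unit disk in the complex plane. -/
def unitDisk : Set ℂ := {z : ℂ | ‖z‖ < 1}

/-- The generalized Koebe function `k_a`, using the principal branch of the logarithm
(via the complex power function). -/
def koebeFn (a : ℂ) (z : ℂ) : ℂ :=
  if a = 0 then (1 / 2) * Complex.log ((1 + z) / (1 - z))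
  else (1 / (2 * a)) * (((1 + z) / (1 - z)) ^ a - 1)

/-- The lens map `l_R` (with principal-branch powers); note that this formula also
gives `l_0 ≡ 0` and `l_1 = id` on the unit disk. -/
def lensMap (R : ℝ) (z : ℂ) : ℂ :=
  (((1 + z) / (1 - z)) ^ (R : ℂ) - 1) / (((1 + z) / (1 - z)) ^ (R : ℂ) + 1)

/-- The `n`-th Taylor coefficient of `f` at `0`. -/
def coeffAt (f : ℂ → ℂ) (n : ℕ) : ℂ := iteratedDeriv n f 0 / n.factorial

def wm (z : ℂ) : ℂ := (1 + z) / (1 - z)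

lemma unitDisk_open : IsOpen unitDisk :=
  isOpen_lt continuous_norm continuous_const

lemma one_sub_ne_zero {z : ℂ} (hz : z ∈ unitDisk) : (1 : ℂ) - z ≠ 0 := by
  intro h
  have : (1:ℂ) = z := by linear_combination h
  simp [unitDisk, ← this] at hz

lemma one_add_ne_zero {z : ℂ} (hz : z ∈ unitDisk) : (1 : ℂ) + z ≠ 0 := by
  intro h
  have : z = -1 := by linear_combination h
  simp [unitDisk, this] at hz

lemma wm_re_pos {z : ℂ} (hz : z ∈ unitDisk) : 0 < (wm z).re := by
  have h1 : (1:ℂ) - z ≠ 0 := one_sub_ne_zero hz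
  have h2 : 0 < Complex.normSq (1 - z) := Complex.normSq_pos.2 h1
  have hz' : Complex.normSq z < 1 := by
    have h3 : ‖z‖ < 1 := hz
    rw [← Complex.sq_norm]
    nlinarith [norm_nonneg z]
  rw [wm, Complex.div_re]
  have key : (1 + z).re * (1 - z).re / Complex.normSq (1 - z)
      + (1 + z).im * (1 - z).im / Complex.normSq (1 - z)
      = (1 - Complex.normSq z) / Complex.normSq (1 - z) := by
    rw [← add_div]
    congr 1
    simp [Complex.normSq_apply]; ring
  rw [key]
  exact div_pos (by linarith) h2

lemma wm_ne_zero {z : ℂ} (hz : z ∈ unitDisk) : wm z ≠ 0 := by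
  intro h
  have := wm_re_pos hz
  rw [h] at this; simp at this

lemma wm_slit {z : ℂ} (hz : z ∈ unitDisk) : wm z ∈ Complex.slitPlane :=
  Complex.mem_slitPlane_iff.2 (Or.inl (wm_re_pos hz))

lemma wm_arg_lt {z : ℂ} (hz : z ∈ unitDisk) : |Complex.arg (wm z)| < Real.pi / 2 :=
  Complex.abs_arg_lt_pi_div_two_iff.2 (Or.inl (wm_re_pos hz))

lemma wm_inj : Set.InjOn wm unitDisk := by
  intro z1 h1 z2 h2 he
  have k1 := one_sub_ne_zero h1
  have k2 := one_sub_ne_zero h2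
  rw [wm, wm, div_eq_div_iff k1 k2] at he
  have : (2:ℂ) * z1 = 2 * z2 := by linear_combination he
  field_simp at this
  exact this

lemma wm_hasDeriv {z : ℂ} (hz : z ∈ unitDisk) :
    HasDerivAt wm (2 / (1 - z) ^ 2) z := by
  have h1 := one_sub_ne_zero hz
  have hd := (((hasDerivAt_id z).const_add 1).div
    ((hasDerivAt_id z).const_sub 1) h1)
  refine hd.congr_deriv ?_
  simp only [id]
  field_simp
  ring

lemma koebeFn_hasDeriv (c : ℝ) {z : ℂ} (hz : z ∈ unitDisk) :
    HasDerivAt (koebeFn (c : ℂ)) (wm z ^ ((c : ℂ) - 1) / (1 - z) ^ 2) z := by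
  have h1 := one_sub_ne_zero hz
  have hw0 := wm_ne_zero hz
  by_cases hc : (c : ℂ) = 0
  · have hd := (wm_hasDeriv hz).clog (wm_slit hz)
    have hd2 := hd.const_mul (1/2 : ℂ)
    have he : koebeFn (c:ℂ) = fun z => (1/2 : ℂ) * Complex.log ((1 + z)/(1 - z)) := by
      funext t; simp [koebeFn, hc]
    rw [he, hc]
    refine hd2.congr_deriv ?_
    rw [show (0:ℂ) - 1 = -1 by ring, Complex.cpow_neg_one]
    field_simp [wm]
  · have hd := ((wm_hasDeriv hz).cpow_const (c := (c:ℂ)) (wm_slit hz)).sub_const 1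
    have hd2 := hd.const_mul (1/(2*(c:ℂ)))
    have he : koebeFn (c:ℂ) = fun z => (1/(2*(c:ℂ))) * (((1 + z)/(1 - z)) ^ (c:ℂ) - 1) := by
      funext t; simp [koebeFn, hc]
    rw [he]
    refine hd2.congr_deriv ?_
    have : wm = fun z => (1 + z)/(1 - z) := rfl
    field_simp [wm]

lemma wm_cpow_eq {z : ℂ} (hz : z ∈ unitDisk) (c : ℝ) :
    wm z ^ (c : ℂ) = Complex.exp ((c : ℂ) * Complex.log (wm z)) := by
  rw [Complex.cpow_def_of_ne_zero (wm_ne_zero hz), mul_comm]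

lemma wm_cpow_re {z : ℂ} (hz : z ∈ unitDisk) (c : ℝ) :
    (wm z ^ (c : ℂ)).re
      = Real.exp (c * Real.log (‖wm z‖)) * Real.cos (c * Complex.arg (wm z)) := by
  rw [wm_cpow_eq hz c, Complex.exp_re]
  congr 2
  · simp [Complex.log_re]
  · simp [Complex.log_im]

lemma wm_cpow_im {z : ℂ} (hz : z ∈ unitDisk) (c : ℝ) :
    (wm z ^ (c : ℂ)).im
      = Real.exp (c * Real.log (‖wm z‖)) * Real.sin (c * Complex.arg (wm z)) := by
  rw [wm_cpow_eq hz c, Complex.exp_im]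
  congr 2
  · simp [Complex.log_re]
  · simp [Complex.log_im]

lemma wm_cpow_re_pos {z : ℂ} (hz : z ∈ unitDisk) {c : ℝ} (hc : |c| ≤ 1) :
    0 < (wm z ^ (c : ℂ)).re := by
  rw [wm_cpow_re hz c]
  have harg := wm_arg_lt hz
  have : |c * Complex.arg (wm z)| < Real.pi / 2 := by
    rw [abs_mul]
    calc |c| * |Complex.arg (wm z)| ≤ 1 * |Complex.arg (wm z)| := by
          apply mul_le_mul_of_nonneg_right hc (abs_nonneg _)
      _ = |Complex.arg (wm z)| := one_mul _
      _ < Real.pi / 2 := harg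
  have hcos : 0 < Real.cos (c * Complex.arg (wm z)) := by
    apply Real.cos_pos_of_mem_Ioo
    constructor
    · linarith [abs_lt.1 this |>.1]
    · linarith [abs_lt.1 this |>.2]
  positivity

lemma wm_cpow_add_one_ne_zero {z : ℂ} (hz : z ∈ unitDisk) {c : ℝ} (hc : |c| ≤ 1) :
    wm z ^ (c : ℂ) + 1 ≠ 0 := by
  intro h
  have h2 : (wm z ^ (c : ℂ) + 1).re = 0 := by rw [h]; simp
  rw [Complex.add_re, Complex.one_re] at h2
  have := wm_cpow_re_pos hz hc
  linarith

lemma one_sub_lensMap {R : ℝ} {z : ℂ} (hz : z ∈ unitDisk) (hc : |R| ≤ 1) :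
    1 - lensMap R z = 2 / (wm z ^ (R : ℂ) + 1) := by
  have hne := wm_cpow_add_one_ne_zero hz hc
  rw [lensMap]
  have : ((1 + z)/(1 - z)) = wm z := rfl
  rw [this]
  field_simp
  ring

lemma one_add_lensMap {R : ℝ} {z : ℂ} (hz : z ∈ unitDisk) (hc : |R| ≤ 1) :
    1 + lensMap R z = 2 * wm z ^ (R : ℂ) / (wm z ^ (R : ℂ) + 1) := by
  have hne := wm_cpow_add_one_ne_zero hz hc
  rw [lensMap]
  have : ((1 + z)/(1 - z)) = wm z := rfl
  rw [this]
  field_simp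
  ring

lemma koebeFn_zero_val (c : ℝ) : koebeFn (c : ℂ) 0 = 0 := by
  by_cases hc : (c : ℂ) = 0 <;> simp [koebeFn, hc]

lemma unitDisk_convex : Convex ℝ unitDisk := by
  have : unitDisk = Metric.ball (0 : ℂ) 1 := by
    ext z; simp [unitDisk, Metric.mem_ball, Complex.dist_eq]
  rw [this]
  exact convex_ball 0 1

lemma zero_mem_unitDisk : (0 : ℂ) ∈ unitDisk := by simp [unitDisk]

section HG
variable {a R : ℝ} {h g : ℂ → ℂ}

lemma hg_sum_hasDeriv (hR0 : 0 ≤ R) (hR1 : R ≤ 1)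
    (hh : DifferentiableOn ℂ h unitDisk) (hg : DifferentiableOn ℂ g unitDisk)
    (hshear : ∀ z ∈ unitDisk, h z - g z = koebeFn (a : ℂ) z)
    (hdil : ∀ z ∈ unitDisk, deriv g z = lensMap R z * deriv h z)
    {z : ℂ} (hz : z ∈ unitDisk) :
    HasDerivAt (fun z => h z + g z) (wm z ^ (((a + R : ℝ) : ℂ) - 1) / (1 - z) ^ 2) z := by
  have hRabs : |R| ≤ 1 := by rw [abs_le]; constructor <;> linarith
  have hnz : unitDisk ∈ nhds z := unitDisk_open.mem_nhds hz
  have hha : DifferentiableAt ℂ h z := (hh z hz).differentiableAt hnz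
  have hga : DifferentiableAt ℂ g z := (hg z hz).differentiableAt hnz
  have hdh : HasDerivAt h (deriv h z) z := hha.hasDerivAt
  have hdg : HasDerivAt g (deriv g z) z := hga.hasDerivAt
  -- h - g has derivative of koebeFn a
  have hsub : HasDerivAt (fun z => h z - g z) (deriv h z - deriv g z) z := hdh.sub hdg
  have heq : (fun z => h z - g z) =ᶠ[nhds z] koebeFn (a : ℂ) :=
    Filter.eventuallyEq_of_mem hnz hshear
  have hka : HasDerivAt (fun z => h z - g z) (wm z ^ ((a : ℂ) - 1) / (1 - z) ^ 2) z :=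
    (koebeFn_hasDeriv a hz).congr_of_eventuallyEq heq
  have huniq : deriv h z - deriv g z = wm z ^ ((a : ℂ) - 1) / (1 - z) ^ 2 :=
    hsub.unique hka
  set s := wm z ^ (R : ℂ) with hs
  have hsne : s + 1 ≠ 0 := wm_cpow_add_one_ne_zero hz hRabs
  have hl : deriv g z = lensMap R z * deriv h z := hdil z hz
  have hl1 : 1 - lensMap R z = 2 / (s + 1) := one_sub_lensMap hz hRabs
  -- solve for deriv h
  have hdh_eq : deriv h z * (2 / (s + 1)) = wm z ^ ((a : ℂ) - 1) / (1 - z) ^ 2 := by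
    rw [← hl1]
    rw [mul_sub, mul_one, ← huniq, hl]
    ring
  have hsum : deriv h z + deriv g z = s * (wm z ^ ((a : ℂ) - 1) / (1 - z) ^ 2) := by
    rw [hl, ← hdh_eq]
    have hle : lensMap R z = 2 * s / (s + 1) - 1 := by
      linear_combination one_add_lensMap hz hRabs
    rw [hle]
    field_simp
    ring
  have hpow : s * wm z ^ ((a : ℂ) - 1) = wm z ^ (((a + R : ℝ) : ℂ) - 1) := by
    rw [hs, ← Complex.cpow_add _ _ (wm_ne_zero hz)]
    congr 1
    push_cast
    ring
  have : deriv h z + deriv g z = wm z ^ (((a + R : ℝ) : ℂ) - 1) / (1 - z) ^ 2 := by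
    rw [hsum, ← hpow]; ring
  rw [← this]
  exact hdh.add hdg

lemma hg_sum_eq (hR0 : 0 ≤ R) (hR1 : R ≤ 1)
    (hh : DifferentiableOn ℂ h unitDisk) (hg : DifferentiableOn ℂ g unitDisk)
    (h0 : h 0 = 0) (g0 : g 0 = 0)
    (hshear : ∀ z ∈ unitDisk, h z - g z = koebeFn (a : ℂ) z)
    (hdil : ∀ z ∈ unitDisk, deriv g z = lensMap R z * deriv h z)
    {z : ℂ} (hz : z ∈ unitDisk) :
    h z + g z = koebeFn ((a + R : ℝ) : ℂ) z := by
  set F := fun z => h z + g z - koebeFn ((a + R : ℝ) : ℂ) z with hF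
  have hFd : ∀ x ∈ unitDisk, HasDerivAt F 0 x := by
    intro x hx
    have h1 := hg_sum_hasDeriv hR0 hR1 hh hg hshear hdil hx
    have h2 := koebeFn_hasDeriv (a + R) hx
    rw [hF]
    have := h1.sub h2
    rw [sub_self] at this
    exact this
  have hFdiff : DifferentiableOn ℂ F unitDisk := fun x hx =>
    ((hFd x hx).differentiableAt).differentiableWithinAt
  have hfderiv : ∀ x ∈ unitDisk, fderivWithin ℂ F unitDisk x = 0 := by
    intro x hx
    rw [fderivWithin_of_isOpen unitDisk_open hx]
    have := ((hFd x hx).hasFDerivAt).fderiv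
    rw [this]
    ext
    simp
  have := unitDisk_convex.is_const_of_fderivWithin_eq_zero hFdiff hfderiv hz zero_mem_unitDisk
  have hF0 : F 0 = 0 := by
    simp only [hF, h0, g0, koebeFn_zero_val]; ring
  rw [hF0] at this
  have : h z + g z - koebeFn ((a + R : ℝ) : ℂ) z = 0 := this
  linear_combination this

/-! ### Real analysis core -/

open Real in
lemma sin_pos_iff_of_abs_lt_pi {x : ℝ} (hx : |x| < Real.pi) :
    0 < Real.sin x ↔ 0 < x := by
  rcases abs_lt.1 hx with ⟨h1, h2⟩
  constructor
  · intro hs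
    by_contra hle
    push_neg at hle
    have : Real.sin (-x) ≥ 0 := by
      rcases eq_or_lt_of_le hle with he | hlt
      · simp [he]
      · exact le_of_lt (Real.sin_pos_of_pos_of_lt_pi (by linarith) (by linarith))
    rw [Real.sin_neg] at this
    linarith
  · intro hx0
    exact Real.sin_pos_of_pos_of_lt_pi hx0 h2

lemma sin_eq_zero_iff_of_abs_lt_pi {x : ℝ} (hx : |x| < Real.pi) :
    Real.sin x = 0 ↔ x = 0 := by
  constructor
  · intro hs
    rcases lt_trichotomy x 0 with hlt | he | hgt
    · have : 0 < Real.sin (-x) := (sin_pos_iff_of_abs_lt_pi (by rwa [abs_neg])).2 (by linarith)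
      rw [Real.sin_neg] at this; linarith
    · exact he
    · have := (sin_pos_iff_of_abs_lt_pi hx).2 hgt; linarith
  · intro hx0; simp [hx0]

lemma abs_mul_lt_pi {a t : ℝ} (ha : |a| ≤ 2) (ht : |t| < Real.pi / 2) :
    |a * t| < Real.pi := by
  rw [abs_mul]
  calc |a| * |t| ≤ 2 * |t| := mul_le_mul_of_nonneg_right ha (abs_nonneg _)
    _ < 2 * (Real.pi / 2) := by
        apply mul_lt_mul_of_pos_left ht (by norm_num)
    _ = Real.pi := by ring

lemma a_mul_sin_pos_iff {a t : ℝ} (ha : |a| ≤ 2) (ha0 : a ≠ 0) (ht : |t| < Real.pi / 2) :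
    0 < a * Real.sin (a * t) ↔ 0 < t := by
  have hpi := abs_mul_lt_pi ha ht
  rcases lt_or_gt_of_ne ha0 with hneg | hpos
  · rw [show a * Real.sin (a*t) = (-a) * Real.sin (-(a*t)) by rw [Real.sin_neg]; ring]
    rw [mul_pos_iff]
    constructor
    · rintro (⟨h1, h2⟩ | ⟨h1, h2⟩)
      · have := (sin_pos_iff_of_abs_lt_pi (by rwa [abs_neg])).1 h2
        nlinarith
      · linarith
    · intro ht0
      left
      refine ⟨by linarith, ?_⟩
      exact (sin_pos_iff_of_abs_lt_pi (by rwa [abs_neg])).2 (by nlinarith)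
  · rw [mul_pos_iff]
    constructor
    · rintro (⟨h1, h2⟩ | ⟨h1, h2⟩)
      · have := (sin_pos_iff_of_abs_lt_pi hpi).1 h2
        nlinarith
      · linarith
    · intro ht0
      left
      exact ⟨hpos, (sin_pos_iff_of_abs_lt_pi hpi).2 (by nlinarith)⟩

lemma sin_a_eq_zero_iff {a t : ℝ} (ha : |a| ≤ 2) (ha0 : a ≠ 0) (ht : |t| < Real.pi / 2) :
    Real.sin (a * t) = 0 ↔ t = 0 := by
  rw [sin_eq_zero_iff_of_abs_lt_pi (abs_mul_lt_pi ha ht)]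
  constructor
  · intro h; rcases mul_eq_zero.1 h with h | h
    · exact absurd h ha0
    · exact h
  · intro h; rw [h, mul_zero]

/-- The level-curve profile function. -/
def psi (a R D : ℝ) (t : ℝ) : ℝ :=
  if a + R = 0 then Real.log (D / Real.sin (a * t)) / a
  else (D / Real.sin (a * t)) ^ ((a + R) / a) * Real.cos ((a + R) * t)

section Psi
variable {a R D : ℝ}

lemma psi_facts (ha : |a| ≤ 2) (ha0 : a ≠ 0) (hR0 : 0 ≤ R) (hR1 : R ≤ 1)
    (hDa : 0 < D * a) {t : ℝ}
    (ht : t ∈ Set.Ioo 0 (Real.pi / 2)) :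
    Real.sin (a * t) ≠ 0 ∧ 0 < D / Real.sin (a * t) ∧ 0 < Real.cos (R * t) ∧
      0 < a * Real.sin (a * t) := by
  obtain ⟨ht0, htp⟩ := ht
  have htabs : |t| < Real.pi / 2 := by rw [abs_of_pos ht0]; exact htp
  have hpos : 0 < a * Real.sin (a * t) := (a_mul_sin_pos_iff ha ha0 htabs).2 ht0
  have hsne : Real.sin (a * t) ≠ 0 := by
    intro h; rw [h, mul_zero] at hpos; exact lt_irrefl 0 hpos
  refine ⟨hsne, ?_, ?_, hpos⟩
  · have : 0 < (D * a) * (a * Real.sin (a * t)) := mul_pos hDa hpos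
    have h2 : 0 < D * Real.sin (a * t) * a ^ 2 := by nlinarith
    have ha2 : 0 < a ^ 2 := by positivity
    have : 0 < D * Real.sin (a * t) := by nlinarith
    exact div_pos_iff.2 (by rcases mul_pos_iff.1 this with ⟨h1,h2⟩|⟨h1,h2⟩; exacts [Or.inl ⟨h1,h2⟩, Or.inr ⟨h1,h2⟩])
  · apply Real.cos_pos_of_mem_Ioo
    constructor
    · have : 0 ≤ R * t := mul_nonneg hR0 (le_of_lt ht0)
      have hpi : 0 < Real.pi := Real.pi_pos
      linarith
    · calc R * t ≤ 1 * t := mul_le_mul_of_nonneg_right hR1 (le_of_lt ht0)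
        _ = t := one_mul t
        _ < Real.pi / 2 := htp

lemma psi_hasDeriv (ha : |a| ≤ 2) (ha0 : a ≠ 0) (hR0 : 0 ≤ R) (hR1 : R ≤ 1)
    (hDa : 0 < D * a) {t : ℝ} (ht : t ∈ Set.Ioo 0 (Real.pi / 2)) :
    HasDerivAt (psi a R D)
      (if a + R = 0 then -Real.cos (a * t) / Real.sin (a * t)
       else -(a + R) * (D / Real.sin (a * t)) ^ ((a + R) / a) * Real.cos (R * t)
          / Real.sin (a * t)) t := by
  obtain ⟨hsne, hqpos, hcRpos, hapos⟩ := psi_facts ha ha0 hR0 hR1 hDa ht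
  set q := D / Real.sin (a * t) with hq
  have hsin : HasDerivAt (fun t => Real.sin (a * t)) (Real.cos (a * t) * a) t := by
    simpa [Function.comp_def] using (Real.hasDerivAt_sin (a * t)).comp t ((hasDerivAt_id t).const_mul a)
  have hqd : HasDerivAt (fun t => D / Real.sin (a * t))
      ((0 * Real.sin (a * t) - D * (Real.cos (a * t) * a)) / (Real.sin (a * t)) ^ 2) t :=
    (hasDerivAt_const t D).div hsin hsne
  by_cases hb : a + R = 0
  · -- psi = log ∘ q / a
    have hlog : HasDerivAt (fun t => Real.log (D / Real.sin (a * t)))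
        (q⁻¹ * ((0 * Real.sin (a * t) - D * (Real.cos (a * t) * a)) / (Real.sin (a * t)) ^ 2)) t :=
      by have := (Real.hasDerivAt_log (ne_of_gt hqpos)).comp t hqd; exact this
    have := hlog.div_const a
    have hpsieq : psi a R D = fun t => Real.log (D / Real.sin (a * t)) / a := by
      funext x; simp [psi, hb]
    rw [hpsieq, if_pos hb]
    refine this.congr_deriv ?_
    rw [hq]
    have hD : D = q * Real.sin (a * t) := by rw [hq]; field_simp
    rw [hD]
    field_simp
    ring
  · -- psi = q ^ (b/a) * cos (b t)
    have hrpow : HasDerivAt (fun t => (D / Real.sin (a * t)) ^ ((a + R) / a))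
        ((0 * Real.sin (a * t) - D * (Real.cos (a * t) * a)) / (Real.sin (a * t)) ^ 2
          * ((a + R) / a) * q ^ ((a + R) / a - 1)) t :=
      hqd.rpow_const (Or.inl (ne_of_gt hqpos))
    have hcos : HasDerivAt (fun t => Real.cos ((a + R) * t)) (-Real.sin ((a + R) * t) * (a + R)) t := by
      simpa [Function.comp_def] using (Real.hasDerivAt_cos ((a + R) * t)).comp t ((hasDerivAt_id t).const_mul (a + R))
    have hmul := hrpow.mul hcos
    have hpsieq : psi a R D = fun t => (D / Real.sin (a * t)) ^ ((a + R) / a) * Real.cos ((a + R) * t) := by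
      funext x; simp [psi, hb]
    rw [hpsieq, if_neg hb]
    refine hmul.congr_deriv ?_
    have hD : D = q * Real.sin (a * t) := by rw [hq]; field_simp
    have hq1 : q ^ ((a + R) / a - 1) = q ^ ((a + R) / a) / q := by
      rw [Real.rpow_sub hqpos, Real.rpow_one]
    have hRt : R * t = (a + R) * t - a * t := by ring
    rw [hq1, hRt, Real.cos_sub, hD]
    have hqne : q ≠ 0 := ne_of_gt hqpos
    field_simp
    ring

lemma psi_injOn (ha : |a| ≤ 2) (ha0 : a ≠ 0) (hR0 : 0 ≤ R) (hR1 : R ≤ 1)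
    (hDa : 0 < D * a) :
    Set.InjOn (psi a R D) (Set.Ioo 0 (Real.pi / 2)) := by
  have hconv : Convex ℝ (Set.Ioo (0:ℝ) (Real.pi / 2)) := convex_Ioo _ _
  have hcont : ContinuousOn (psi a R D) (Set.Ioo 0 (Real.pi / 2)) := fun x hx =>
    ((psi_hasDeriv ha ha0 hR0 hR1 hDa hx).continuousAt).continuousWithinAt
  have hderiv : ∀ t ∈ Set.Ioo (0:ℝ) (Real.pi / 2), deriv (psi a R D) t =
      (if a + R = 0 then -Real.cos (a * t) / Real.sin (a * t)
       else -(a + R) * (D / Real.sin (a * t)) ^ ((a + R) / a) * Real.cos (R * t)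
          / Real.sin (a * t)) := fun t ht => (psi_hasDeriv ha ha0 hR0 hR1 hDa ht).deriv
  by_cases hb : a + R = 0
  · -- a = -R < 0, derivative positive
    apply StrictMonoOn.injOn
    apply strictMonoOn_of_deriv_pos hconv hcont
    intro t ht
    rw [interior_Ioo] at ht
    rw [hderiv t ht, if_pos hb]
    obtain ⟨hsne, hqpos, hcRpos, hapos⟩ := psi_facts ha ha0 hR0 hR1 hDa ht
    have hca : 0 < Real.cos (a * t) := by
      have hta : |t| < Real.pi / 2 := by rw [abs_of_pos ht.1]; exact ht.2
      apply Real.cos_pos_of_mem_Ioo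
      have h1 : |a * t| < Real.pi / 2 := by
        have haR : a = -R := by linarith
        rw [haR, abs_mul, abs_neg]
        calc |R| * |t| ≤ 1 * |t| := by
              apply mul_le_mul_of_nonneg_right _ (abs_nonneg _)
              rw [abs_le]; constructor <;> linarith
          _ = |t| := one_mul _
          _ < Real.pi / 2 := hta
      rcases abs_lt.1 h1 with ⟨h2, h3⟩
      exact ⟨by linarith, h3⟩
    have hane : a < 0 := by
      rcases lt_or_gt_of_ne ha0 with h | h
      · exact h
      · exfalso; have : R = -a := by linarith
        rw [this] at hR0; linarith
    have hsneg : Real.sin (a * t) < 0 := by nlinarith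
    have : -Real.cos (a * t) / Real.sin (a * t) = Real.cos (a * t) / (-Real.sin (a * t)) := by
      rw [div_neg, neg_div]
    rw [this]
    exact div_pos hca (by linarith)
  · have key : ∀ t ∈ Set.Ioo (0:ℝ) (Real.pi / 2),
        deriv (psi a R D) t
          = (-(a * (a + R)) * ((D / Real.sin (a * t)) ^ ((a + R) / a) * Real.cos (R * t)))
              / (a * Real.sin (a * t)) := by
      intro t ht
      obtain ⟨hsne, hqpos, hcRpos, hapos⟩ := psi_facts ha ha0 hR0 hR1 hDa ht
      rw [hderiv t ht, if_neg hb]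
      field_simp
    have hfac : ∀ t ∈ Set.Ioo (0:ℝ) (Real.pi / 2),
        0 < (D / Real.sin (a * t)) ^ ((a + R) / a) * Real.cos (R * t) := by
      intro t ht
      obtain ⟨hsne, hqpos, hcRpos, hapos⟩ := psi_facts ha ha0 hR0 hR1 hDa ht
      exact mul_pos (Real.rpow_pos_of_pos hqpos _) hcRpos
    rcases lt_trichotomy (a * (a + R)) 0 with hab | hab | hab
    · apply StrictMonoOn.injOn
      apply strictMonoOn_of_deriv_pos hconv hcont
      intro t ht
      rw [interior_Ioo] at ht
      rw [key t ht]
      obtain ⟨hsne, hqpos, hcRpos, hapos⟩ := psi_facts ha ha0 hR0 hR1 hDa ht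
      exact div_pos (mul_pos (by linarith) (hfac t ht)) hapos
    · exact absurd hab (mul_ne_zero ha0 hb)
    · apply StrictAntiOn.injOn
      apply strictAntiOn_of_deriv_neg hconv hcont
      intro t ht
      rw [interior_Ioo] at ht
      rw [key t ht]
      obtain ⟨hsne, hqpos, hcRpos, hapos⟩ := psi_facts ha ha0 hR0 hR1 hDa ht
      apply div_neg_of_neg_of_pos _ hapos
      have := hfac t ht
      nlinarith

end Psi

def Yf (a u t : ℝ) : ℝ := if a = 0 then t else Real.exp (a * u) * Real.sin (a * t)
def Xf (b u t : ℝ) : ℝ := if b = 0 then u else Real.exp (b * u) * Real.cos (b * t)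

lemma Xf_eq_psi {a R u t : ℝ} (ha0 : a ≠ 0) (hsne : Real.sin (a * t) ≠ 0) :
    Xf (a + R) u t = psi a R (Real.exp (a * u) * Real.sin (a * t)) t := by
  have hq : Real.exp (a * u) * Real.sin (a * t) / Real.sin (a * t) = Real.exp (a * u) := by
    field_simp
  by_cases hb : a + R = 0
  · rw [Xf, if_pos hb, psi, if_pos hb, hq, Real.log_exp]
    field_simp
  · rw [Xf, if_neg hb, psi, if_neg hb, hq]
    congr 1
    rw [Real.rpow_def_of_pos (Real.exp_pos _), Real.log_exp]
    congr 1
    field_simp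

lemma core_pos {a R u₁ t₁ u₂ t₂ : ℝ} (ha : |a| ≤ 2) (ha0 : a ≠ 0)
    (hR0 : 0 ≤ R) (hR1 : R ≤ 1)
    (ht₁ : t₁ ∈ Set.Ioo 0 (Real.pi / 2)) (ht₂ : t₂ ∈ Set.Ioo 0 (Real.pi / 2))
    (hY : Real.exp (a * u₁) * Real.sin (a * t₁) = Real.exp (a * u₂) * Real.sin (a * t₂))
    (hX : Xf (a + R) u₁ t₁ = Xf (a + R) u₂ t₂) :
    u₁ = u₂ ∧ t₁ = t₂ := by
  have habs₁ : |t₁| < Real.pi / 2 := by rw [abs_of_pos ht₁.1]; exact ht₁.2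
  have habs₂ : |t₂| < Real.pi / 2 := by rw [abs_of_pos ht₂.1]; exact ht₂.2
  have hs₁ : Real.sin (a * t₁) ≠ 0 := fun hz =>
    ne_of_gt ht₁.1 ((sin_a_eq_zero_iff ha ha0 habs₁).1 hz)
  have hs₂ : Real.sin (a * t₂) ≠ 0 := fun hz =>
    ne_of_gt ht₂.1 ((sin_a_eq_zero_iff ha ha0 habs₂).1 hz)
  set D := Real.exp (a * u₁) * Real.sin (a * t₁) with hD
  have hDa : 0 < D * a := by
    have h1 : 0 < a * Real.sin (a * t₁) := (a_mul_sin_pos_iff ha ha0 habs₁).2 ht₁.1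
    have h2 : 0 < Real.exp (a * u₁) := Real.exp_pos _
    rw [hD]; nlinarith
  have e1 : Xf (a + R) u₁ t₁ = psi a R D t₁ := Xf_eq_psi ha0 hs₁
  have e2 : Xf (a + R) u₂ t₂ = psi a R D t₂ := by
    rw [hY]; exact Xf_eq_psi ha0 hs₂
  have ht : t₁ = t₂ := by
    apply psi_injOn ha ha0 hR0 hR1 hDa ht₁ ht₂
    rw [← e1, ← e2, hX]
  refine ⟨?_, ht⟩
  have hY3 : Real.exp (a * u₁) * Real.sin (a * t₁) = Real.exp (a * u₂) * Real.sin (a * t₂) :=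
    hD.symm.trans hY
  rw [ht] at hY3
  have hexp : Real.exp (a * u₁) = Real.exp (a * u₂) := mul_right_cancel₀ hs₂ hY3
  have := Real.exp_injective hexp
  exact mul_left_cancel₀ ha0 this

lemma core {a R u₁ t₁ u₂ t₂ : ℝ} (ha1 : -2 ≤ a) (ha2 : a ≤ 2)
    (hR0 : 0 ≤ R) (hR1 : R ≤ 1)
    (ht₁ : |t₁| < Real.pi / 2) (ht₂ : |t₂| < Real.pi / 2)
    (hY : Yf a u₁ t₁ = Yf a u₂ t₂) (hX : Xf (a + R) u₁ t₁ = Xf (a + R) u₂ t₂) :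
    u₁ = u₂ ∧ t₁ = t₂ := by
  have ha : |a| ≤ 2 := abs_le.2 ⟨ha1, ha2⟩
  by_cases ha0 : a = 0
  · subst ha0
    rw [Yf, if_pos rfl, Yf, if_pos rfl] at hY
    subst hY
    refine ⟨?_, rfl⟩
    rw [zero_add] at hX
    by_cases hR : R = 0
    · rw [Xf, if_pos hR, Xf, if_pos hR] at hX; exact hX
    · rw [Xf, if_neg hR, Xf, if_neg hR] at hX
      have hcos : 0 < Real.cos (R * t₁) := by
        apply Real.cos_pos_of_mem_Ioo
        have : |R * t₁| < Real.pi / 2 := by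
          rw [abs_mul]
          calc |R| * |t₁| ≤ 1 * |t₁| := by
                apply mul_le_mul_of_nonneg_right _ (abs_nonneg _)
                rw [abs_le]; constructor <;> linarith
            _ = |t₁| := one_mul _
            _ < Real.pi / 2 := ht₁
        rcases abs_lt.1 this with ⟨h1, h2⟩
        exact ⟨by linarith, h2⟩
      have hexp : Real.exp (R * u₁) = Real.exp (R * u₂) := by
        have := mul_right_cancel₀ (ne_of_gt hcos) hX
        exact this
      have := Real.exp_injective hexp
      field_simp at this
      exact this
  · rw [Yf, if_neg ha0, Yf, if_neg ha0] at hY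
    rcases lt_trichotomy t₁ 0 with htneg | htzero | htpos
    · -- both negative; reflect
      have ht₂neg : t₂ < 0 := by
        by_contra hc
        push_neg at hc
        have h1 : a * Real.sin (a * t₁) < 0 := by
          have h2 : ¬ (0 < a * Real.sin (a * t₁)) := by
            rw [a_mul_sin_pos_iff ha ha0 ht₁]; linarith
          have h3 : a * Real.sin (a * t₁) ≠ 0 := by
            intro hz
            rcases mul_eq_zero.1 hz with hz | hz
            · exact ha0 hz
            · rw [sin_a_eq_zero_iff ha ha0 ht₁] at hz; linarith
          rcases lt_or_gt_of_ne h3 with h | h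
          · exact h
          · exact absurd h h2
        have h4 : 0 ≤ a * Real.sin (a * t₂) := by
          rcases eq_or_lt_of_le hc with he | hlt
          · rw [← he]; simp
          · exact le_of_lt ((a_mul_sin_pos_iff ha ha0 ht₂).2 hlt)
        have e1 : a * (Real.exp (a * u₁) * Real.sin (a * t₁))
            = a * (Real.exp (a * u₂) * Real.sin (a * t₂)) := by rw [hY]
        nlinarith [Real.exp_pos (a * u₁), Real.exp_pos (a * u₂)]
      -- reflect
      have hY' : Real.exp (a * u₁) * Real.sin (a * (-t₁))
          = Real.exp (a * u₂) * Real.sin (a * (-t₂)) := by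
        rw [mul_neg, mul_neg, Real.sin_neg, Real.sin_neg]
        linarith [hY]
      have hX' : Xf (a + R) u₁ (-t₁) = Xf (a + R) u₂ (-t₂) := by
        rw [Xf, Xf] at hX ⊢
        by_cases hb : a + R = 0
        · rwa [if_pos hb, if_pos hb] at hX ⊢
        · rw [if_neg hb, if_neg hb] at hX ⊢
          rw [mul_neg, mul_neg, Real.cos_neg, Real.cos_neg]
          exact hX
      have := core_pos ha ha0 hR0 hR1
        (t₁ := -t₁) (t₂ := -t₂)
        ⟨by linarith, by rcases abs_lt.1 ht₁ with ⟨h1,h2⟩; linarith⟩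
        ⟨by linarith, by rcases abs_lt.1 ht₂ with ⟨h1,h2⟩; linarith⟩
        hY' hX'
      exact ⟨this.1, by linarith [this.2]⟩
    · -- t₁ = 0
      subst htzero
      have hY0 : Real.sin (a * t₂) = 0 := by
        rw [mul_zero, Real.sin_zero, mul_zero] at hY
        have hexp : Real.exp (a * u₂) ≠ 0 := ne_of_gt (Real.exp_pos _)
        rcases mul_eq_zero.1 hY.symm with h | h
        · exact absurd h hexp
        · exact h
      have ht₂0 : t₂ = 0 := (sin_a_eq_zero_iff ha ha0 ht₂).1 hY0
      subst ht₂0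
      refine ⟨?_, rfl⟩
      rw [Xf, Xf] at hX
      by_cases hb : a + R = 0
      · rwa [if_pos hb, if_pos hb] at hX
      · rw [if_neg hb, if_neg hb, mul_zero, Real.cos_zero, mul_one, mul_one] at hX
        have := Real.exp_injective hX
        field_simp at this
        exact this
    · -- t₁ > 0, then t₂ > 0
      have ht₂pos : 0 < t₂ := by
        rw [← a_mul_sin_pos_iff ha ha0 ht₂]
        have h1 : 0 < a * Real.sin (a * t₁) := (a_mul_sin_pos_iff ha ha0 ht₁).2 htpos
        have e1 : a * (Real.exp (a * u₁) * Real.sin (a * t₁))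
            = a * (Real.exp (a * u₂) * Real.sin (a * t₂)) := by rw [hY]
        nlinarith [Real.exp_pos (a * u₁), Real.exp_pos (a * u₂)]
      exact core_pos ha ha0 hR0 hR1
        ⟨htpos, by rcases abs_lt.1 ht₁ with ⟨h1,h2⟩; linarith⟩
        ⟨ht₂pos, by rcases abs_lt.1 ht₂ with ⟨h1,h2⟩; linarith⟩
        hY hX

/-! ### Real/imaginary parts of the Koebe functions -/

lemma koebeFn_im_eq {z : ℂ} (hz : z ∈ unitDisk) {c : ℝ} (hc : c ≠ 0) :
    (koebeFn (c : ℂ) z).im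
      = Real.exp (c * Real.log (‖wm z‖)) * Real.sin (c * Complex.arg (wm z))
          / (2 * c) := by
  have hcc : (c : ℂ) ≠ 0 := Complex.ofReal_ne_zero.2 hc
  have h1 : koebeFn (c : ℂ) z = ((1 / (2 * c) : ℝ) : ℂ) * (wm z ^ (c : ℂ) - 1) := by
    rw [koebeFn, if_neg hcc]
    norm_cast
  rw [h1, Complex.im_ofReal_mul, Complex.sub_im, Complex.one_im, sub_zero, wm_cpow_im hz c]
  field_simp

lemma koebeFn_re_eq {z : ℂ} (hz : z ∈ unitDisk) {c : ℝ} (hc : c ≠ 0) :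
    (koebeFn (c : ℂ) z).re
      = (Real.exp (c * Real.log (‖wm z‖)) * Real.cos (c * Complex.arg (wm z)) - 1)
          / (2 * c) := by
  have hcc : (c : ℂ) ≠ 0 := Complex.ofReal_ne_zero.2 hc
  have h1 : koebeFn (c : ℂ) z = ((1 / (2 * c) : ℝ) : ℂ) * (wm z ^ (c : ℂ) - 1) := by
    rw [koebeFn, if_neg hcc]
    norm_cast
  rw [h1, Complex.re_ofReal_mul, Complex.sub_re, Complex.one_re, wm_cpow_re hz c]
  field_simp

lemma koebeFn_zero_im (z : ℂ) :
    (koebeFn ((0 : ℝ) : ℂ) z).im = Complex.arg (wm z) / 2 := by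
  have h1 : koebeFn ((0:ℝ) : ℂ) z = (1/2 : ℂ) * Complex.log (wm z) := by
    rw [koebeFn]; norm_num; rfl
  rw [h1]
  have : (1/2 : ℂ) = (((1:ℝ)/2 : ℝ) : ℂ) := by norm_num
  rw [this, Complex.im_ofReal_mul, Complex.log_im]
  ring

lemma koebeFn_zero_re (z : ℂ) :
    (koebeFn ((0 : ℝ) : ℂ) z).re = Real.log (‖wm z‖) / 2 := by
  have h1 : koebeFn ((0:ℝ) : ℂ) z = (1/2 : ℂ) * Complex.log (wm z) := by
    rw [koebeFn]; norm_num; rfl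
  rw [h1]
  have : (1/2 : ℂ) = (((1:ℝ)/2 : ℝ) : ℂ) := by norm_num
  rw [this, Complex.re_ofReal_mul, Complex.log_re]
  ring

lemma koebe_parts_inj {a R : ℝ} (ha1 : -2 ≤ a) (ha2 : a ≤ 2) (hR0 : 0 ≤ R) (hR1 : R ≤ 1)
    {z₁ z₂ : ℂ} (h₁ : z₁ ∈ unitDisk) (h₂ : z₂ ∈ unitDisk)
    (him : (koebeFn (a : ℂ) z₁).im = (koebeFn (a : ℂ) z₂).im)
    (hre : (koebeFn ((a + R : ℝ) : ℂ) z₁).re = (koebeFn ((a + R : ℝ) : ℂ) z₂).re) :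
    z₁ = z₂ := by
  set u₁ := Real.log (‖wm z₁‖) with hu₁
  set t₁ := Complex.arg (wm z₁) with ht₁
  set u₂ := Real.log (‖wm z₂‖) with hu₂
  set t₂ := Complex.arg (wm z₂) with ht₂
  have harg₁ : |t₁| < Real.pi / 2 := wm_arg_lt h₁
  have harg₂ : |t₂| < Real.pi / 2 := wm_arg_lt h₂
  have hY : Yf a u₁ t₁ = Yf a u₂ t₂ := by
    by_cases ha0 : a = 0
    · subst ha0
      rw [koebeFn_zero_im, koebeFn_zero_im] at him
      rw [Yf, if_pos rfl, Yf, if_pos rfl]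
      linarith
    · rw [koebeFn_im_eq h₁ ha0, koebeFn_im_eq h₂ ha0] at him
      rw [Yf, if_neg ha0, Yf, if_neg ha0]
      have h2a : (2 : ℝ) * a ≠ 0 := by simp [ha0]
      field_simp at him
      exact him
  have hX : Xf (a + R) u₁ t₁ = Xf (a + R) u₂ t₂ := by
    by_cases hb : a + R = 0
    · rw [hb] at hre
      rw [koebeFn_zero_re, koebeFn_zero_re] at hre
      rw [Xf, if_pos hb, Xf, if_pos hb]
      linarith
    · rw [koebeFn_re_eq h₁ hb, koebeFn_re_eq h₂ hb] at hre
      rw [Xf, if_neg hb, Xf, if_neg hb]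
      have h2b : (2 : ℝ) * (a + R) ≠ 0 := by simp [hb]
      field_simp at hre
      linarith
  obtain ⟨hu, ht⟩ := core ha1 ha2 hR0 hR1 harg₁ harg₂ hY hX
  have habs : ‖wm z₁‖ = ‖wm z₂‖ := by
    have p₁ : 0 < ‖wm z₁‖ := norm_pos_iff.2 (wm_ne_zero h₁)
    have p₂ : 0 < ‖wm z₂‖ := norm_pos_iff.2 (wm_ne_zero h₂)
    rw [← Real.exp_log p₁, ← Real.exp_log p₂, ← hu₁, ← hu₂, hu]
  exact wm_inj h₁ h₂ (Complex.ext_norm_arg habs ht)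

section KParts
variable {a R : ℝ} {h g : ℂ → ℂ}

lemma K_re_eq (hR0 : 0 ≤ R) (hR1 : R ≤ 1)
    (hh : DifferentiableOn ℂ h unitDisk) (hg : DifferentiableOn ℂ g unitDisk)
    (h0 : h 0 = 0) (g0 : g 0 = 0)
    (hshear : ∀ z ∈ unitDisk, h z - g z = koebeFn (a : ℂ) z)
    (hdil : ∀ z ∈ unitDisk, deriv g z = lensMap R z * deriv h z)
    {z : ℂ} (hz : z ∈ unitDisk) :
    (h z + (starRingEnd ℂ) (g z)).re = (koebeFn ((a + R : ℝ) : ℂ) z).re := by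
  have hs := hg_sum_eq hR0 hR1 hh hg h0 g0 hshear hdil hz
  have e1 : (h z + (starRingEnd ℂ) (g z)).re = (h z + g z).re := by
    simp [Complex.add_re, Complex.conj_re]
  rw [e1, hs]

lemma K_im_eq (hR0 : 0 ≤ R) (hR1 : R ≤ 1)
    (hh : DifferentiableOn ℂ h unitDisk) (hg : DifferentiableOn ℂ g unitDisk)
    (h0 : h 0 = 0) (g0 : g 0 = 0)
    (hshear : ∀ z ∈ unitDisk, h z - g z = koebeFn (a : ℂ) z)
    (hdil : ∀ z ∈ unitDisk, deriv g z = lensMap R z * deriv h z)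
    {z : ℂ} (hz : z ∈ unitDisk) :
    (h z + (starRingEnd ℂ) (g z)).im = (koebeFn (a : ℂ) z).im := by
  have hd := hshear z hz
  have e1 : (h z + (starRingEnd ℂ) (g z)).im = (h z - g z).im := by
    simp [Complex.add_im, Complex.conj_im, Complex.sub_im]
    ring
  rw [e1, hd]

end KParts

/-! ### The counterexample for |a| > 2 -/

section Counter
variable {a : ℝ}

lemma counter_mem (hφ : |Real.pi / a| < Real.pi / 2) :
    (Complex.exp ((Real.pi / a : ℝ) * Complex.I) - 1)
      / (Complex.exp ((Real.pi / a : ℝ) * Complex.I) + 1) ∈ unitDisk := by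
  set φ := Real.pi / a with hφdef
  set e := Complex.exp ((φ : ℝ) * Complex.I) with he
  have hcos : 0 < Real.cos φ := by
    apply Real.cos_pos_of_mem_Ioo
    rcases abs_lt.1 hφ with ⟨h1, h2⟩
    exact ⟨h1, h2⟩
  have hre : e.re = Real.cos φ := by
    rw [he, Complex.exp_ofReal_mul_I_re]
  have him : e.im = Real.sin φ := by
    rw [he, Complex.exp_ofReal_mul_I_im]
  have habs : ‖e‖ = 1 := by rw [he]; exact Complex.norm_exp_ofReal_mul_I φ
  have hne : e + 1 ≠ 0 := by
    intro hcon
    have : (e + 1).re = 0 := by rw [hcon]; simp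
    rw [Complex.add_re, Complex.one_re, hre] at this
    linarith
  show ‖(e - 1) / (e + 1)‖ < 1
  rw [norm_div]
  rw [div_lt_one (norm_pos_iff.2 hne)]
  have h1 : Complex.normSq (e - 1) < Complex.normSq (e + 1) := by
    have e1 : Complex.normSq (e - 1) = Complex.normSq e - 2 * e.re + 1 := by
      simp [Complex.normSq_apply, Complex.sub_re, Complex.sub_im]; ring
    have e2 : Complex.normSq (e + 1) = Complex.normSq e + 2 * e.re + 1 := by
      simp [Complex.normSq_apply, Complex.add_re, Complex.add_im]; ring
    rw [e1, e2, hre]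
    linarith
  have h2 : (‖e - 1‖) ^ 2 < (‖e + 1‖) ^ 2 := by
    rw [Complex.sq_norm, Complex.sq_norm]; exact h1
  nlinarith [norm_nonneg (e - 1), norm_nonneg (e + 1)]

lemma counter_wm (hφ : |Real.pi / a| < Real.pi / 2) :
    wm ((Complex.exp ((Real.pi / a : ℝ) * Complex.I) - 1)
      / (Complex.exp ((Real.pi / a : ℝ) * Complex.I) + 1))
      = Complex.exp ((Real.pi / a : ℝ) * Complex.I) := by
  set φ := Real.pi / a with hφdef
  set e := Complex.exp ((φ : ℝ) * Complex.I) with he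
  have hcos : 0 < Real.cos φ := by
    apply Real.cos_pos_of_mem_Ioo
    rcases abs_lt.1 hφ with ⟨h1, h2⟩
    exact ⟨h1, h2⟩
  have hre : e.re = Real.cos φ := by rw [he, Complex.exp_ofReal_mul_I_re]
  have hne : e + 1 ≠ 0 := by
    intro hcon
    have : (e + 1).re = 0 := by rw [hcon]; simp
    rw [Complex.add_re, Complex.one_re, hre] at this
    linarith
  have hzmem := counter_mem hφ
  have hden : (1 : ℂ) - (e - 1) / (e + 1) ≠ 0 := one_sub_ne_zero hzmem
  rw [wm]
  rw [div_eq_iff hden]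
  field_simp
  ring
end Counter

lemma arg_exp_of_mem {φ : ℝ} (h1 : -Real.pi < φ) (h2 : φ ≤ Real.pi) :
    Complex.arg (Complex.exp ((φ : ℝ) * Complex.I)) = φ := by
  rw [Complex.exp_mul_I]
  have := Complex.arg_cos_add_sin_mul_I (θ := φ) ⟨h1, h2⟩
  simpa using this


/-- For real `a` and `0 ≤ R ≤ 1`, the generalized harmonic Koebe function
`K_{a,R} = h + conj g` (where `(h, g)` solves the shear system `h - g = k_a`,
`g' = l_R · h'`, `h(0) = g(0) = 0`) is univalent on the unit disk if and only if
`-2 ≤ a ≤ 2`. -/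
theorem generalized_harmonic_koebe_univalent_iff (a R : ℝ) (hR0 : 0 ≤ R) (hR1 : R ≤ 1)
    (h g : ℂ → ℂ)
    (hh : DifferentiableOn ℂ h unitDisk) (hg : DifferentiableOn ℂ g unitDisk)
    (h0 : h 0 = 0) (g0 : g 0 = 0)
    (hshear : ∀ z ∈ unitDisk, h z - g z = koebeFn (a : ℂ) z)
    (hdil : ∀ z ∈ unitDisk, deriv g z = lensMap R z * deriv h z) :
    Set.InjOn (fun z => h z + (starRingEnd ℂ) (g z)) unitDisk ↔ -2 ≤ a ∧ a ≤ 2 := by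
  constructor
  · -- forward: univalent → |a| ≤ 2
    intro hinj
    by_contra hcon
    have hcon' : a < -2 ∨ 2 < a := by
      rcases not_and_or.1 hcon with hl | hr
      · left; linarith [not_le.1 hl]
      · right; linarith [not_le.1 hr]
    have ha0 : a ≠ 0 := by rcases hcon' with hc | hc <;> intro he <;> rw [he] at hc <;> linarith
    have hb0 : a + R ≠ 0 := by
      rcases hcon' with hc | hc <;> intro he <;> linarith
    have hpi : 0 < Real.pi := Real.pi_pos
    set φ := Real.pi / a with hφdef
    have hφabs : |φ| < Real.pi / 2 := by
      rw [hφdef, abs_div, abs_of_pos hpi]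
      rcases hcon' with hc | hc
      · rw [abs_of_neg (by linarith : a < 0)]
        rw [div_lt_iff₀ (by linarith : (0:ℝ) < -a)]
        nlinarith
      · rw [abs_of_pos (by linarith : 0 < a)]
        rw [div_lt_iff₀ (by linarith : (0:ℝ) < a)]
        nlinarith
    have hφne : φ ≠ 0 := by
      rw [hφdef]
      exact div_ne_zero (ne_of_gt hpi) ha0
    set e := Complex.exp ((φ : ℝ) * Complex.I) with he
    set z₁ := (e - 1) / (e + 1) with hz₁def
    set z₂ := (starRingEnd ℂ) z₁ with hz₂def
    have hz₁mem : z₁ ∈ unitDisk := counter_mem hφabs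
    have hz₂mem : z₂ ∈ unitDisk := by
      show ‖z₂‖ < 1
      rw [hz₂def, Complex.norm_conj]
      exact hz₁mem
    have hw₁ : wm z₁ = e := counter_wm hφabs
    have hw₂ : wm z₂ = (starRingEnd ℂ) e := by
      rw [hz₂def]
      have : wm ((starRingEnd ℂ) z₁) = (starRingEnd ℂ) (wm z₁) := by
        simp [wm, map_div₀]
      rw [this, hw₁]
    have habs₁ : ‖wm z₁‖ = 1 := by rw [hw₁, he]; exact Complex.norm_exp_ofReal_mul_I φ
    have habs₂ : ‖wm z₂‖ = 1 := by
      rw [hw₂, Complex.norm_conj, he]; exact Complex.norm_exp_ofReal_mul_I φ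
    have harg₁ : Complex.arg (wm z₁) = φ := by
      rw [hw₁, he]
      exact arg_exp_of_mem (by rcases abs_lt.1 hφabs with ⟨h1, h2⟩; linarith)
        (by rcases abs_lt.1 hφabs with ⟨h1, h2⟩; linarith)
    have harg₂ : Complex.arg (wm z₂) = -φ := by
      rw [hw₂, Complex.arg_conj]
      rw [he, arg_exp_of_mem (by rcases abs_lt.1 hφabs with ⟨h1, h2⟩; linarith)
        (by rcases abs_lt.1 hφabs with ⟨h1, h2⟩; linarith)]
      rw [if_neg (by intro hcontra; rw [hcontra] at hφabs; rw [abs_of_pos hpi] at hφabs; linarith)]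
    have haφ : a * φ = Real.pi := by rw [hφdef]; field_simp
    have him : (koebeFn (a : ℂ) z₁).im = (koebeFn (a : ℂ) z₂).im := by
      rw [koebeFn_im_eq hz₁mem ha0, koebeFn_im_eq hz₂mem ha0, habs₁, habs₂, harg₁, harg₂]
      rw [haφ, mul_neg, haφ, Real.sin_neg, Real.sin_pi]
      norm_num
    have hre : (koebeFn ((a + R : ℝ) : ℂ) z₁).re = (koebeFn ((a + R : ℝ) : ℂ) z₂).re := by
      rw [koebeFn_re_eq hz₁mem hb0, koebeFn_re_eq hz₂mem hb0, habs₁, habs₂, harg₁, harg₂]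
      rw [mul_neg, Real.cos_neg]
    have hK : h z₁ + (starRingEnd ℂ) (g z₁) = h z₂ + (starRingEnd ℂ) (g z₂) := by
      apply Complex.ext
      · rw [K_re_eq hR0 hR1 hh hg h0 g0 hshear hdil hz₁mem,
          K_re_eq hR0 hR1 hh hg h0 g0 hshear hdil hz₂mem]
        exact hre
      · rw [K_im_eq hR0 hR1 hh hg h0 g0 hshear hdil hz₁mem,
          K_im_eq hR0 hR1 hh hg h0 g0 hshear hdil hz₂mem]
        exact him
    have heqz : z₁ = z₂ := hinj hz₁mem hz₂mem hK
    -- but z₁ has nonzero imaginary part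
    have hsin : Real.sin φ ≠ 0 := by
      intro hcontra
      have : |φ| < Real.pi := by
        rcases abs_lt.1 hφabs with ⟨h1, h2⟩
        rw [abs_lt]; constructor <;> linarith
      exact hφne ((sin_eq_zero_iff_of_abs_lt_pi this).1 hcontra)
    have hcos : 0 < Real.cos φ := by
      apply Real.cos_pos_of_mem_Ioo
      rcases abs_lt.1 hφabs with ⟨h1, h2⟩
      exact ⟨h1, h2⟩
    have hne : e + 1 ≠ 0 := by
      intro hcontra
      have : (e + 1).re = 0 := by rw [hcontra]; simp
      rw [Complex.add_re, Complex.one_re, he, Complex.exp_ofReal_mul_I_re] at this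
      linarith
    have hnsq : 0 < Complex.normSq (e + 1) := Complex.normSq_pos.2 hne
    have himz : z₁.im = 2 * Real.sin φ / Complex.normSq (e + 1) := by
      rw [hz₁def, Complex.div_im]
      rw [Complex.sub_im, Complex.sub_re, Complex.add_im, Complex.add_re,
        Complex.one_im, Complex.one_re]
      rw [he, Complex.exp_ofReal_mul_I_re, Complex.exp_ofReal_mul_I_im]
      field_simp
      ring
    have : z₁.im = 0 := by
      have := heqz
      rw [hz₂def] at this
      have h2 : (starRingEnd ℂ) z₁ = z₁ := this.symm
      exact (Complex.conj_eq_iff_im.1 h2)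
    rw [himz, div_eq_zero_iff] at this
    rcases this with h3 | h3
    · exact hsin (by linarith)
    · linarith [hnsq, h3]
  · -- backward: |a| ≤ 2 → univalent
    rintro ⟨ha1, ha2⟩ z₁ h₁ z₂ h₂ heq
    simp only at heq
    have him : (koebeFn (a : ℂ) z₁).im = (koebeFn (a : ℂ) z₂).im := by
      rw [← K_im_eq hR0 hR1 hh hg h0 g0 hshear hdil h₁,
        ← K_im_eq hR0 hR1 hh hg h0 g0 hshear hdil h₂, heq]
    have hre : (koebeFn ((a + R : ℝ) : ℂ) z₁).re = (koebeFn ((a + R : ℝ) : ℂ) z₂).re := by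
      rw [← K_re_eq hR0 hR1 hh hg h0 g0 hshear hdil h₁,
        ← K_re_eq hR0 hR1 hh hg h0 g0 hshear hdil h₂, heq]
    exact koebe_parts_inj ha1 ha2 hR0 hR1 h₁ h₂ him hre
end HG
end
end

section
/- Let (A_n)_{n≥0} and (B_n)_{n≥0} be sequences of nonnegative real numbers with A_0 = B_0 = B_1 = 0 and A_1 = 1, satisfying for all integers n ≥ 1 the harmonic Marty relations (n+1)·A_{n+1} = 2·A_2·A_n + 2·B_2·B_n + (n−1)·A_{n−1} and (n+1)·B_{n+1} = 2·A_2·B_n + 2·B_2·A_n + (n−1)·B_{n−1}. Suppose the power series h(z) = z + Σ_{n≥2} A_n z^n and g(z) = Σ_{n≥2} B_n z^n converge on 𝔻. Then h + g = k_{A_2 + B_2} and h − g = k_{A_2 − B_2} on 𝔻. -/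
open Complex Set

noncomputable section

lemma one_sub_ne {z : ℂ} (hz : ‖z‖ < 1) : 1 - z ≠ 0 := by
  intro h
  have : z = 1 := by linear_combination -h
  rw [this] at hz; simp at hz

lemma one_add_ne {z : ℂ} (hz : ‖z‖ < 1) : 1 + z ≠ 0 := by
  intro h
  have : z = -1 := by linear_combination h
  rw [this] at hz; simp at hz

lemma slit {z : ℂ} (hz : ‖z‖ < 1) : (1 + z) / (1 - z) ∈ Complex.slitPlane := by
  have h1 := one_sub_ne hz
  have hns : 0 < Complex.normSq (1 - z) := Complex.normSq_pos.mpr h1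
  have h2 : Complex.normSq z < 1 := by
    rw [Complex.normSq_eq_norm_sq]; nlinarith [norm_nonneg z]
  have hre : ((1 + z) / (1 - z)).re = (1 - Complex.normSq z) / Complex.normSq (1 - z) := by
    rw [Complex.div_re]
    simp only [Complex.add_re, Complex.sub_re, Complex.one_re, Complex.add_im,
      Complex.sub_im, Complex.one_im, Complex.normSq_apply]
    field_simp
    ring
  exact Complex.mem_slitPlane_iff.mpr (Or.inl (by rw [hre]; exact div_pos (by linarith) hns))

lemma w_ne {z : ℂ} (hz : ‖z‖ < 1) : (1 + z) / (1 - z) ≠ 0 :=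
  div_ne_zero (one_add_ne hz) (one_sub_ne hz)

lemma one_sub_sq_ne {z : ℂ} (hz : ‖z‖ < 1) : 1 - z ^ 2 ≠ 0 := by
  have : 1 - z ^ 2 = (1 - z) * (1 + z) := by ring
  rw [this]; exact mul_ne_zero (one_sub_ne hz) (one_add_ne hz)

lemma w_hasDeriv {z : ℂ} (hz : ‖z‖ < 1) :
    HasDerivAt (fun z : ℂ => (1 + z) / (1 - z)) (2 / (1 - z) ^ 2) z := by
  have h1 : HasDerivAt (fun z : ℂ => 1 + z) 1 z := by
    simpa using (hasDerivAt_id z).const_add 1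
  have h2 : HasDerivAt (fun z : ℂ => 1 - z) (-1) z := by
    simpa using (hasDerivAt_id z).const_sub 1
  have := h1.div h2 (one_sub_ne hz)
  exact this.congr_deriv (by ring)

lemma koebeFn_zero (a : ℂ) : koebeFn a 0 = 0 := by
  rcases eq_or_ne a 0 with rfl | ha
  · simp [koebeFn]
  · simp [koebeFn, ha]

lemma koebe_hasDerivAt (a : ℂ) {z : ℂ} (hz : ‖z‖ < 1) :
    HasDerivAt (koebeFn a) ((2 * a * koebeFn a z + 1) / (1 - z ^ 2)) z := by
  have h1 := one_sub_ne hz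
  have h2 := one_add_ne hz
  have h3 := one_sub_sq_ne hz
  have hw := w_hasDeriv hz
  rcases eq_or_ne a 0 with rfl | ha
  · have hlog := hw.clog (slit hz)
    have hmain : HasDerivAt (koebeFn 0)
        ((1 / 2 : ℂ) * (2 / (1 - z) ^ 2 / ((1 + z) / (1 - z)))) z := by
      have := hlog.const_mul (1 / 2 : ℂ)
      exact this.congr_of_eventuallyEq (Filter.Eventually.of_forall fun y => by simp [koebeFn])
    convert hmain using 1
    field_simp
    ring
  · have hcp := hw.cpow_const (c := a) (slit hz)
    have hmain : HasDerivAt (koebeFn a)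
        ((1 / (2 * a)) * (a * ((1 + z) / (1 - z)) ^ (a - 1) * (2 / (1 - z) ^ 2))) z := by
      have := (hcp.sub_const 1).const_mul (1 / (2 * a))
      exact this.congr_of_eventuallyEq (Filter.Eventually.of_forall fun y => by simp [koebeFn, ha])
    convert hmain using 1
    have e1 : 2 * a * koebeFn a z + 1 = ((1 + z) / (1 - z)) ^ a := by
      rw [koebeFn, if_neg ha]; field_simp; ring
    have key : ((1 + z) / (1 - z)) ^ (a - 1) * ((1 + z) / (1 - z)) = ((1 + z) / (1 - z)) ^ a := by
      calc ((1 + z) / (1 - z)) ^ (a - 1) * ((1 + z) / (1 - z))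
          = ((1 + z) / (1 - z)) ^ (a - 1) * ((1 + z) / (1 - z)) ^ (1 : ℂ) := by
            rw [Complex.cpow_one]
        _ = ((1 + z) / (1 - z)) ^ (a - 1 + 1) := (Complex.cpow_add _ _ (w_ne hz)).symm
        _ = ((1 + z) / (1 - z)) ^ a := by ring_nf
    rw [e1, ← key]
    field_simp
    ring

set_option maxHeartbeats 1000000 in
lemma series_ode (c : ℕ → ℂ) (a : ℂ) (hc0 : c 0 = 0) (hc1 : c 1 = 1)
    (hrec : ∀ n : ℕ, ((n : ℂ) + 2) * c (n + 2) = 2 * a * c (n + 1) + (n : ℂ) * c n)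
    (hconv : ∀ z ∈ unitDisk, Summable fun n : ℕ => c n * z ^ n)
    {z : ℂ} (hz : z ∈ unitDisk) :
    ∃ S : ℂ, HasDerivAt (fun w => ∑' n : ℕ, c n * w ^ n) S z ∧
      (1 - z ^ 2) * S = 2 * a * (∑' n : ℕ, c n * z ^ n) + 1 := by
  have hz' : ‖z‖ < 1 := hz
  set r : ℝ := (‖z‖ + 1) / 2 with hrdef
  have habs := norm_nonneg z
  have hzr : ‖z‖ < r := by rw [hrdef]; linarith
  have hr0 : 0 < r := by rw [hrdef]; linarith
  have hr1 : r < 1 := by rw [hrdef]; linarith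
  set ρ : ℝ := (r + 1) / 2 with hρdef
  have hρr : r < ρ := by rw [hρdef]; linarith
  have hρ1 : ρ < 1 := by rw [hρdef]; linarith
  have hρ0 : 0 < ρ := by linarith
  clear_value r ρ
  clear hrdef hρdef
  -- boundedness of |c n| ρ^n
  have hSig : Summable fun n : ℕ => c n * (ρ : ℂ) ^ n := by
    apply hconv
    show ‖(ρ : ℂ)‖ < 1
    rw [Complex.norm_real, Real.norm_eq_abs, abs_of_pos hρ0]; exact hρ1
  have htend : Filter.Tendsto (fun n : ℕ => ‖c n * (ρ : ℂ) ^ n‖) Filter.atTop (nhds 0) := by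
    simpa using hSig.tendsto_atTop_zero.norm
  obtain ⟨M, hM⟩ := htend.bddAbove_range
  have hM' : ∀ n : ℕ, ‖c n‖ * ρ ^ n ≤ M := by
    intro n
    have := hM (Set.mem_range_self n)
    simpa [norm_mul, norm_pow, Complex.norm_real, abs_of_pos hρ0] using this
  have hM0 : 0 ≤ M := le_trans (by positivity) (hM' 0)
  -- summable bound
  set u : ℕ → ℝ := fun n => ‖c n‖ * n * r ^ (n - 1) with hudef
  have hq1 : r / ρ < 1 := (div_lt_one hρ0).mpr hρr
  have hq0 : 0 ≤ r / ρ := by positivity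
  have husum : Summable u := by
    rw [← summable_nat_add_iff 1]
    have hvsum : Summable fun m : ℕ => M / ρ * (((m : ℝ) + 1) * (r / ρ) ^ m) := by
      apply Summable.mul_left
      have h1 : Summable fun m : ℕ => (m : ℝ) * (r / ρ) ^ m := by
        have := summable_pow_mul_geometric_of_norm_lt_one (R := ℝ) 1
          (r := r / ρ) (by rwa [Real.norm_eq_abs, _root_.abs_of_nonneg hq0])
        simpa using this
      have h2 : Summable fun m : ℕ => (r / ρ) ^ m := summable_geometric_of_lt_one hq0 hq1
      simpa [add_mul] using h1.add h2
    apply Summable.of_nonneg_of_le (fun m => by positivity) _ hvsum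
    intro m
    have hc : ‖c (m + 1)‖ ≤ M / ρ ^ (m + 1) := by
      rw [le_div_iff₀ (by positivity)]
      exact hM' (m + 1)
    have : u (m + 1) = ‖c (m + 1)‖ * (m + 1) * r ^ m := by
      rw [hudef]; simp
    rw [this]
    calc ‖c (m + 1)‖ * (m + 1) * r ^ m ≤ M / ρ ^ (m + 1) * (m + 1) * r ^ m := by
          gcongr
      _ = M / ρ * (((m : ℝ) + 1) * (r / ρ) ^ m) := by
          rw [div_pow, pow_succ]
          ring
  -- derivative of the series
  have hball : z ∈ Metric.ball (0 : ℂ) r := by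
    simpa [Metric.mem_ball, Complex.dist_eq] using hzr
  have hg : ∀ (n : ℕ) (y : ℂ), y ∈ Metric.ball (0 : ℂ) r →
      HasDerivAt (fun w : ℂ => c n * w ^ n) (c n * ((n : ℂ) * y ^ (n - 1))) y :=
    fun n y _ => (hasDerivAt_pow n y).const_mul (c n)
  have hgb : ∀ (n : ℕ) (y : ℂ), y ∈ Metric.ball (0 : ℂ) r →
      ‖c n * ((n : ℂ) * y ^ (n - 1))‖ ≤ u n := by
    intro n y hy
    have hyr : ‖y‖ ≤ r := le_of_lt (by simpa [Metric.mem_ball, Complex.dist_eq] using hy)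
    rw [hudef]
    simp only [norm_mul, norm_pow, Complex.norm_natCast]
    rw [mul_assoc]
    gcongr
  have hS : HasDerivAt (fun w => ∑' n : ℕ, c n * w ^ n)
      (∑' n : ℕ, c n * ((n : ℂ) * z ^ (n - 1))) z :=
    hasDerivAt_tsum_of_isPreconnected husum Metric.isOpen_ball
      (convex_ball (0 : ℂ) r).isPreconnected hg hgb hball (hconv z hz) hball
  have hg'sum : Summable fun n : ℕ => c n * ((n : ℂ) * z ^ (n - 1)) :=
    Summable.of_norm_bounded husum (fun n => hgb n z hball)
  refine ⟨_, hS, ?_⟩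
  -- now the algebraic identity
  set t1 : ℕ → ℂ := fun n => c (n + 1) * (((n : ℂ) + 1) * z ^ n) with ht1def
  have hshift : ∀ n : ℕ, c (n + 1) * (((n + 1 : ℕ) : ℂ) * z ^ (n + 1 - 1)) = t1 n := by
    intro n; rw [ht1def]; push_cast [Nat.add_sub_cancel]; ring
  have ht1sum : Summable t1 := by
    have := (summable_nat_add_iff 1).mpr hg'sum
    exact this.congr hshift
  have hS1 : (∑' n : ℕ, c n * ((n : ℂ) * z ^ (n - 1))) = ∑' n, t1 n := by
    rw [Summable.tsum_eq_zero_add hg'sum]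
    simp only [hc0, Nat.cast_zero, zero_mul, mul_zero, zero_add]
    exact tsum_congr hshift
  have hterm : ∀ n : ℕ, t1 (n + 1)
      = 2 * a * (c (n + 1) * z ^ (n + 1)) + z ^ 2 * (c n * ((n : ℂ) * z ^ (n - 1))) := by
    intro n
    match n with
    | 0 =>
      have h := hrec 0
      rw [ht1def]
      push_cast at h ⊢
      simp only [Nat.zero_sub, pow_zero, CharP.cast_eq_zero, zero_mul, mul_zero, add_zero]
      linear_combination z * h
    | (m + 1) =>
      have h := hrec (m + 1)
      rw [ht1def]
      push_cast [Nat.add_sub_cancel] at h ⊢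
      linear_combination z ^ (m + 2) * h
  have hshiftsum : Summable fun n : ℕ => c (n + 1) * z ^ (n + 1) :=
    (summable_nat_add_iff 1).mpr (hconv z hz)
  have hsum2 : Summable fun n : ℕ => z ^ 2 * (c n * ((n : ℂ) * z ^ (n - 1))) :=
    hg'sum.mul_left _
  have e : ∑' n : ℕ, t1 (n + 1)
      = 2 * a * (∑' n : ℕ, c (n + 1) * z ^ (n + 1))
        + z ^ 2 * (∑' n : ℕ, c n * ((n : ℂ) * z ^ (n - 1))) := by
    rw [tsum_congr hterm, Summable.tsum_add (hshiftsum.mul_left _) hsum2, tsum_mul_left, tsum_mul_left]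
  have eF : (∑' n : ℕ, c n * z ^ n) = c 0 + ∑' n : ℕ, c (n + 1) * z ^ (n + 1) := by
    simpa using Summable.tsum_eq_zero_add (hconv z hz)
  have eT : (∑' n, t1 n) = t1 0 + ∑' n : ℕ, t1 (n + 1) := Summable.tsum_eq_zero_add ht1sum
  have ht10 : t1 0 = 1 := by rw [ht1def]; simp [hc1]
  have eF' : (∑' n : ℕ, c (n + 1) * z ^ (n + 1)) = ∑' n : ℕ, c n * z ^ n := by
    rw [eF, hc0, zero_add]
  have hfin : (∑' n : ℕ, c n * ((n : ℂ) * z ^ (n - 1)))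
      = 1 + 2 * a * (∑' n : ℕ, c n * z ^ n)
        + z ^ 2 * (∑' n : ℕ, c n * ((n : ℂ) * z ^ (n - 1))) := by
    calc (∑' n : ℕ, c n * ((n : ℂ) * z ^ (n - 1))) = ∑' n, t1 n := hS1
      _ = t1 0 + ∑' n : ℕ, t1 (n + 1) := eT
      _ = 1 + (2 * a * (∑' n : ℕ, c (n + 1) * z ^ (n + 1))
            + z ^ 2 * (∑' n : ℕ, c n * ((n : ℂ) * z ^ (n - 1)))) := by rw [ht10, e]
      _ = 1 + 2 * a * (∑' n : ℕ, c n * z ^ n)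
            + z ^ 2 * (∑' n : ℕ, c n * ((n : ℂ) * z ^ (n - 1))) := by rw [eF']; ring
  linear_combination hfin

lemma series_eq_koebe (c : ℕ → ℂ) (a : ℂ) (hc0 : c 0 = 0) (hc1 : c 1 = 1)
    (hrec : ∀ n : ℕ, ((n : ℂ) + 2) * c (n + 2) = 2 * a * c (n + 1) + (n : ℂ) * c n)
    (hconv : ∀ z ∈ unitDisk, Summable fun n : ℕ => c n * z ^ n)
    {z : ℂ} (hz : z ∈ unitDisk) :
    (∑' n : ℕ, c n * z ^ n) = koebeFn a z := by
  set F : ℂ → ℂ := fun w => ∑' n : ℕ, c n * w ^ n with hFdef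
  set Φ : ℂ → ℂ := fun w =>
    (F w - koebeFn a w) * Complex.exp (-a * Complex.log ((1 + w) / (1 - w))) with hΦdef
  have hΦ' : ∀ w ∈ unitDisk, HasDerivAt Φ 0 w := by
    intro w hw
    have hw' : ‖w‖ < 1 := hw
    have h1 := one_sub_ne hw'
    have h2 := one_add_ne hw'
    have h3 := one_sub_sq_ne hw'
    obtain ⟨S, hS, hid⟩ := series_ode c a hc0 hc1 hrec hconv hw
    have hSval : S = (2 * a * F w + 1) / (1 - w ^ 2) := by
      rw [eq_div_iff h3]
      linear_combination hid
    rw [hSval] at hS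
    have hK := koebe_hasDerivAt a hw'
    have hlog := (w_hasDeriv hw').clog (slit hw')
    have hexp := (hlog.const_mul (-a)).cexp
    have hdiff := hS.sub hK
    have hmul := hdiff.mul hexp
    have hww := w_ne hw'
    exact hmul.congr_deriv (by simp only [Pi.sub_apply, hFdef]; field_simp; ring)
  have hUD : unitDisk = Metric.ball (0 : ℂ) 1 := by
    ext w; simp [unitDisk, Metric.mem_ball, Complex.dist_eq]
  have hopen : IsOpen unitDisk := hUD ▸ Metric.isOpen_ball
  have hconvex : Convex ℝ unitDisk := hUD ▸ convex_ball (0 : ℂ) 1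
  have hΦdiff : DifferentiableOn ℂ Φ unitDisk :=
    fun w hw => ((hΦ' w hw).differentiableAt).differentiableWithinAt
  have hfd : ∀ w ∈ unitDisk, fderivWithin ℂ Φ unitDisk w = 0 := by
    intro w hw
    rw [fderivWithin_of_isOpen hopen hw]
    have h0 : HasFDerivAt Φ (0 : ℂ →L[ℂ] ℂ) w := by
      have := (hΦ' w hw).hasFDerivAt
      rw [ContinuousLinearMap.toSpanSingleton_zero] at this
      exact this
    exact h0.fderiv
  have h0mem : (0 : ℂ) ∈ unitDisk := by simp [unitDisk]
  have hconst := hconvex.is_const_of_fderivWithin_eq_zero hΦdiff hfd hz h0mem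
  have hF0 : F 0 = 0 := by
    rw [hFdef]
    have : (∑' n : ℕ, c n * (0 : ℂ) ^ n) = c 0 * (0 : ℂ) ^ 0 :=
      tsum_eq_single 0 (fun n hn => by simp [zero_pow hn])
    simpa [hc0] using this
  have hΦ0 : Φ 0 = 0 := by
    rw [hΦdef]; simp [hF0, koebeFn_zero]
  rw [hΦ0] at hconst
  have hexp_ne : Complex.exp (-a * Complex.log ((1 + z) / (1 - z))) ≠ 0 := Complex.exp_ne_zero _
  have : F z - koebeFn a z = 0 := by
    rcases mul_eq_zero.mp hconst with h | h
    · exact h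
    · exact absurd h hexp_ne
  have := sub_eq_zero.mp this
  exact this

/-- If nonnegative real coefficients `A_n`, `B_n` with `A_0 = B_0 = B_1 = 0`, `A_1 = 1`
satisfy the harmonic Marty relations for all `n ≥ 1` and the power series
`h(z) = Σ A_n zⁿ`, `g(z) = Σ B_n zⁿ` converge on the unit disk, then
`h + g = k_{A_2+B_2}` and `h - g = k_{A_2-B_2}` on the disk. -/
theorem harmonic_marty_relations_give_koebe
    (A B : ℕ → ℝ) (hApos : ∀ n, 0 ≤ A n) (hBpos : ∀ n, 0 ≤ B n)
    (hA0 : A 0 = 0) (hB0 : B 0 = 0) (hB1 : B 1 = 0) (hA1 : A 1 = 1)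
    (hMartyA : ∀ n : ℕ, 1 ≤ n →
      ((n : ℝ) + 1) * A (n + 1)
        = 2 * A 2 * A n + 2 * B 2 * B n + ((n : ℝ) - 1) * A (n - 1))
    (hMartyB : ∀ n : ℕ, 1 ≤ n →
      ((n : ℝ) + 1) * B (n + 1)
        = 2 * A 2 * B n + 2 * B 2 * A n + ((n : ℝ) - 1) * B (n - 1))
    (hconvA : ∀ z ∈ unitDisk, Summable fun n : ℕ => (A n : ℂ) * z ^ n)
    (hconvB : ∀ z ∈ unitDisk, Summable fun n : ℕ => (B n : ℂ) * z ^ n) :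
    ∀ z ∈ unitDisk,
      (∑' n : ℕ, (A n : ℂ) * z ^ n) + (∑' n : ℕ, (B n : ℂ) * z ^ n)
        = koebeFn ((A 2 + B 2 : ℝ) : ℂ) z ∧
      (∑' n : ℕ, (A n : ℂ) * z ^ n) - (∑' n : ℕ, (B n : ℂ) * z ^ n)
        = koebeFn ((A 2 - B 2 : ℝ) : ℂ) z := by
  intro z hz
  have hrecR : ∀ n : ℕ,
      ((n : ℝ) + 2) * A (n + 2) = 2 * A 2 * A (n + 1) + 2 * B 2 * B (n + 1) + (n : ℝ) * A n ∧
      ((n : ℝ) + 2) * B (n + 2) = 2 * A 2 * B (n + 1) + 2 * B 2 * A (n + 1) + (n : ℝ) * B n := by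
    intro n
    have hA := hMartyA (n + 1) (Nat.le_add_left 1 n)
    have hB := hMartyB (n + 1) (Nat.le_add_left 1 n)
    simp only [Nat.add_sub_cancel] at hA hB
    push_cast at hA hB
    constructor <;> linarith
  constructor
  · have := series_eq_koebe (fun n => ((A n + B n : ℝ) : ℂ)) ((A 2 + B 2 : ℝ) : ℂ)
      (by push_cast [hA0, hB0]; ring) (by push_cast [hA1, hB1]; ring)
      (fun n => by
        obtain ⟨hA, hB⟩ := hrecR n
        have : ((n : ℝ) + 2) * (A (n + 2) + B (n + 2))
            = 2 * (A 2 + B 2) * (A (n + 1) + B (n + 1)) + (n : ℝ) * (A n + B n) := by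
          linarith
        push_cast
        exact_mod_cast congrArg (fun x : ℝ => (x : ℂ)) this)
      (fun w hw => ((hconvA w hw).add (hconvB w hw)).congr
        (fun n => by push_cast; ring))
      hz
    rw [← this, ← Summable.tsum_add (hconvA z hz) (hconvB z hz)]
    exact tsum_congr (fun n => by push_cast; ring)
  · have := series_eq_koebe (fun n => ((A n - B n : ℝ) : ℂ)) ((A 2 - B 2 : ℝ) : ℂ)
      (by push_cast [hA0, hB0]; ring) (by push_cast [hA1, hB1]; ring)
      (fun n => by
        obtain ⟨hA, hB⟩ := hrecR n
        have : ((n : ℝ) + 2) * (A (n + 2) - B (n + 2))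
            = 2 * (A 2 - B 2) * (A (n + 1) - B (n + 1)) + (n : ℝ) * (A n - B n) := by
          linarith
        push_cast
        exact_mod_cast congrArg (fun x : ℝ => (x : ℂ)) this)
      (fun w hw => ((hconvA w hw).sub (hconvB w hw)).congr
        (fun n => by push_cast; ring))
      hz
    rw [← this, ← Summable.tsum_sub (hconvA z hz) (hconvB z hz)]
    exact tsum_congr (fun n => by push_cast; ring)
end
end
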